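/- The CNOT gate with control qubit 1 and target qubit 2 satisfies CNOT = c • (I₂ ⊗ H) · (R_Z(-π/2) ⊗ R_Z(-π/2)) · ZZ(π/2) · (I₂ ⊗ H) for some complex c with |c| = 1. -/

import Mathlib

open Matrix
open scoped Kronecker Real

noncomputable section

def PZ : Matrix (Fin 2) (Fin 2) ℂ := !![1, 0; 0, -1]

def Hgate : Matrix (Fin 2) (Fin 2) ℂ := (1 / Real.sqrt 2 : ℝ) • !![1, 1; 1, -1]

def RZ (θ : ℝ) : Matrix (Fin 2) (Fin 2) ℂ :=
  NormedSpace.exp (((-(θ / 2) : ℝ) • Complex.I) • PZ)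

def ZZg (α : ℝ) : Matrix (Fin 2 × Fin 2) (Fin 2 × Fin 2) ℂ :=
  NormedSpace.exp (((-(α / 2) : ℝ) • Complex.I) • (PZ ⊗ₖ PZ))

def I₂ : Matrix (Fin 2) (Fin 2) ℂ := 1

/-- The CNOT gate with control on the first qubit and target on the second,
i.e. the matrix `!![1,0,0,0; 0,1,0,0; 0,0,0,1; 0,0,1,0]` written with indices in
`Fin 2 × Fin 2`: it sends basis state `(a, b)` to `(a, b + a)`. -/
def CNOT : Matrix (Fin 2 × Fin 2) (Fin 2 × Fin 2) ℂ :=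
  Matrix.of fun p q => if p.1 = q.1 ∧ p.2 = q.2 + q.1 then 1 else 0

lemma PZ_diag : PZ = Matrix.diagonal ![1, -1] := by
  ext i j
  fin_cases i <;> fin_cases j <;> simp [PZ, Matrix.diagonal]

lemma exp_pi4 : Complex.exp ((π/4 : ℝ) * Complex.I) = (Real.sqrt 2 : ℂ)/2 * (1 + Complex.I) := by
  rw [Complex.exp_mul_I, ← Complex.ofReal_cos, ← Complex.ofReal_sin,
    Real.cos_pi_div_four, Real.sin_pi_div_four]
  push_cast; ring

lemma exp_neg_pi4 :
    Complex.exp (-((π/4 : ℝ) * Complex.I)) = (Real.sqrt 2 : ℂ)/2 * (1 - Complex.I) := by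
  rw [← neg_mul, ← Complex.ofReal_neg, Complex.exp_mul_I, ← Complex.ofReal_cos,
    ← Complex.ofReal_sin, Real.cos_neg, Real.sin_neg, Real.cos_pi_div_four,
    Real.sin_pi_div_four]
  push_cast; ring

lemma RZ_val : RZ (-(π/2)) =
    Matrix.diagonal ![(Real.sqrt 2 : ℂ)/2 * (1 + Complex.I),
      (Real.sqrt 2 : ℂ)/2 * (1 - Complex.I)] := by
  have E1 : Complex.exp (((π:ℂ)/4) * Complex.I) = (Real.sqrt 2 : ℂ)/2 * (1 + Complex.I) := by
    rw [(by push_cast; ring : ((π:ℂ)/4) * Complex.I = ((π/4 : ℝ):ℂ) * Complex.I), exp_pi4]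
  have E2 : Complex.exp (-(((π:ℂ)/4) * Complex.I)) = (Real.sqrt 2 : ℂ)/2 * (1 - Complex.I) := by
    rw [(by push_cast; ring : -(((π:ℂ)/4) * Complex.I) = -(((π/4 : ℝ):ℂ) * Complex.I)),
      exp_neg_pi4]
  rw [RZ, PZ_diag, ← Matrix.diagonal_smul, Matrix.exp_diagonal]
  refine congrArg Matrix.diagonal (funext fun i => ?_)
  rw [Pi.coe_exp, ← Complex.exp_eq_exp_ℂ]
  fin_cases i <;>
    simp only [Complex.real_smul, Fin.mk_zero, Fin.mk_one, Matrix.cons_val_zero,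
      Matrix.cons_val_one, Matrix.head_cons, Pi.smul_apply, smul_eq_mul, mul_one, mul_neg,
      mul_neg_one] <;>
    push_cast
  · rw [(by push_cast; ring : (-(-(↑π / 2) / 2) : ℂ) * Complex.I = ((π:ℂ)/4) * Complex.I), E1]
  · rw [(by push_cast; ring : -((-(-(↑π / 2) / 2) : ℂ) * Complex.I) = -(((π:ℂ)/4) * Complex.I)),
      E2]

lemma ZZ_val : ZZg (π/2) =
    Matrix.diagonal (fun p : Fin 2 × Fin 2 => if p.1 = p.2
      then (Real.sqrt 2 : ℂ)/2 * (1 - Complex.I)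
      else (Real.sqrt 2 : ℂ)/2 * (1 + Complex.I)) := by
  have E1 : Complex.exp (((π:ℂ)/4) * Complex.I) = (Real.sqrt 2 : ℂ)/2 * (1 + Complex.I) := by
    rw [(by push_cast; ring : ((π:ℂ)/4) * Complex.I = ((π/4 : ℝ):ℂ) * Complex.I), exp_pi4]
  have E2 : Complex.exp (-(((π:ℂ)/4) * Complex.I)) = (Real.sqrt 2 : ℂ)/2 * (1 - Complex.I) := by
    rw [(by push_cast; ring : -(((π:ℂ)/4) * Complex.I) = -(((π/4 : ℝ):ℂ) * Complex.I)),
      exp_neg_pi4]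
  rw [ZZg, PZ_diag, Matrix.diagonal_kronecker_diagonal, ← Matrix.diagonal_smul,
    Matrix.exp_diagonal]
  refine congrArg Matrix.diagonal (funext fun p => ?_)
  rw [Pi.coe_exp, ← Complex.exp_eq_exp_ℂ]
  obtain ⟨i, j⟩ := p
  fin_cases i <;> fin_cases j <;>
    simp only [Complex.real_smul, Fin.mk_zero, Fin.mk_one, Matrix.cons_val_zero,
      Matrix.cons_val_one, Matrix.head_cons, Pi.smul_apply, smul_eq_mul, mul_one, mul_neg,
      mul_neg_one, neg_neg, one_mul, neg_mul] <;>
    norm_num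
  · rw [(by push_cast; ring : -(((π:ℂ)/2/2) * Complex.I) = -(((π:ℂ)/4) * Complex.I)), E2]
  · rw [(by push_cast; ring : ((π:ℂ)/2/2) * Complex.I = ((π:ℂ)/4) * Complex.I), E1]
  · rw [(by push_cast; ring : ((π:ℂ)/2/2) * Complex.I = ((π:ℂ)/4) * Complex.I), E1]
  · rw [(by push_cast; ring : -(((π:ℂ)/2/2) * Complex.I) = -(((π:ℂ)/4) * Complex.I)), E2]

set_option maxHeartbeats 4000000 in
theorem CNOT_eq_H_rotations_ZZ_H :
    ∃ c : ℂ, ‖c‖ = 1 ∧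
      CNOT = c • ((I₂ ⊗ₖ Hgate) * (RZ (-(π / 2)) ⊗ₖ RZ (-(π / 2))) * ZZg (π / 2) *
        (I₂ ⊗ₖ Hgate)) := by
  refine ⟨Complex.exp (-((π/4 : ℝ) * Complex.I)), by simp [Complex.norm_exp], ?_⟩
  rw [exp_neg_pi4]
  have h2 : (Real.sqrt 2 : ℂ) * (Real.sqrt 2 : ℂ) = 2 := by
    rw [← Complex.ofReal_mul, Real.mul_self_sqrt (by norm_num)]; norm_num
  have hsq : (Real.sqrt 2 : ℂ)^2 = 2 := by rw [pow_two]; exact h2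
  have h4 : (Real.sqrt 2 : ℂ)^4 = 4 := by
    rw [(by ring : ((Real.sqrt 2:ℂ))^4 = ((Real.sqrt 2:ℂ)^2)^2), hsq]; norm_num
  have h6 : (Real.sqrt 2 : ℂ)^6 = 8 := by
    rw [(by ring : ((Real.sqrt 2:ℂ))^6 = ((Real.sqrt 2:ℂ)^2)^3), hsq]; norm_num
  have h3 : (Real.sqrt 2 : ℂ)^3 = 2 * Real.sqrt 2 := by
    rw [(by ring : ((Real.sqrt 2:ℂ))^3 = ((Real.sqrt 2:ℂ)^2) * Real.sqrt 2), hsq]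
  have h5 : (Real.sqrt 2 : ℂ)^5 = 4 * Real.sqrt 2 := by
    rw [(by ring : ((Real.sqrt 2:ℂ))^5 = ((Real.sqrt 2:ℂ)^4) * Real.sqrt 2), h4]
  have hI3 : Complex.I^3 = -Complex.I := by
    rw [(by ring : Complex.I^3 = Complex.I^2 * Complex.I), Complex.I_sq]; ring
  have hI4 : Complex.I^4 = 1 := by
    rw [(by ring : Complex.I^4 = (Complex.I^2)^2), Complex.I_sq]; ring
  have hne : (Real.sqrt 2 : ℂ) ≠ 0 := by
    intro h
    rw [h, mul_zero] at h2; norm_num at h2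
  have hinv : ((Real.sqrt 2 : ℂ))⁻¹ = (Real.sqrt 2 : ℂ)/2 := by
    field_simp
    exact hsq.symm
  rw [RZ_val, ZZ_val]
  ext ⟨i, j⟩ ⟨k, l⟩
  fin_cases i <;> fin_cases j <;> fin_cases k <;> fin_cases l <;>
    · simp only [CNOT, I₂, Hgate, Matrix.mul_apply, Matrix.smul_apply, Matrix.of_apply,
        kroneckerMap_apply, Fintype.sum_prod_type, Fin.sum_univ_two, Matrix.diagonal_apply,
        Matrix.one_apply, Matrix.cons_val', Matrix.cons_val_zero, Matrix.cons_val_one,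
        Matrix.head_cons, Matrix.head_fin_const, Matrix.empty_val', Matrix.cons_val_fin_one,
        smul_eq_mul, Prod.mk.injEq, show ((1:Fin 2) + 1) = 0 from by decide,
        show ((0:Fin 2) + 1) = 1 from by decide, show ((1:Fin 2) + 0) = 1 from by decide,
        show ((0:Fin 2) + 0) = 0 from by decide]
      norm_num [-mul_eq_zero]
      try refine Or.inr ?_
      try · simp only [hinv]
            ring_nf
            try simp [Complex.I_sq, hI3, hI4, hsq, h3, h4, h5, h6]
            try ring_nf
            try simp [Complex.I_sq, hI3, hI4, hsq, h3, h4, h5, h6]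
            try ring_nf
            try norm_num

end
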